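/- Gain monotonicity: with notation as above, ∂J/∂a (φ, a) = cos(φ) · (1/(2π)) ∫₀^{2π} v(τ)^⊤ ∇σ(a v(τ)) v(τ) dτ, which is nonnegative whenever cos(φ) ≥ 0. Hence for fixed phase φ with cos φ ≥ 0, J(φ,·) is nondecreasing in a. -/

import Mathlib

open Real Matrix

noncomputable def softmax {n : ℕ} (v : Fin n → ℝ) : Fin n → ℝ :=
  fun i => Real.exp (v i) / ∑ j, Real.exp (v j)

/-- The Jacobian of softmax: `diag(σ(v)) − σ(v)σ(v)ᵀ`. -/
noncomputable def softmaxJac {n : ℕ} (v : Fin n → ℝ) : Matrix (Fin n) (Fin n) ℝ :=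
  Matrix.diagonal (softmax v) - Matrix.of fun i j => softmax v i * softmax v j

/-- Average reward `J(φ, a)` under the sinusoidal payoff environment. -/
noncomputable def avgReward {n : ℕ} (pbar qbar : Fin n → ℝ) (φ a : ℝ) : ℝ :=
  (1 / (2 * π)) * ∫ u in (0:ℝ)..(2 * π),
    ∑ i, (Real.sin u * pbar i + Real.cos u * qbar i) *
      softmax (a • (Real.sin (u - φ) • pbar + Real.cos (u - φ) • qbar)) i

variable {n : ℕ}

lemma sum_exp_pos [Nonempty (Fin n)] (v : Fin n → ℝ) : 0 < ∑ j, Real.exp (v j) :=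
  Finset.sum_pos (fun j _ => Real.exp_pos _) Finset.univ_nonempty

lemma softmax_nonneg (v : Fin n → ℝ) (i : Fin n) : 0 ≤ softmax v i :=
  div_nonneg (Real.exp_pos _).le (Finset.sum_nonneg fun j _ => (Real.exp_pos _).le)

lemma sum_softmax (v : Fin n → ℝ) [Nonempty (Fin n)] : ∑ i, softmax v i = 1 := by
  simp only [softmax, ← Finset.sum_div]
  exact div_self (sum_exp_pos v).ne'

lemma sum_softmax_le_one (v : Fin n → ℝ) : ∑ i, softmax v i ≤ 1 := by
  rcases isEmpty_or_nonempty (Fin n) with h | h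
  · simp
  · exact (sum_softmax v).le

lemma softmax_le_one (v : Fin n → ℝ) (i : Fin n) : softmax v i ≤ 1 := by
  have : Nonempty (Fin n) := ⟨i⟩
  calc softmax v i ≤ ∑ j, softmax v j :=
        Finset.single_le_sum (fun j _ => softmax_nonneg v j) (Finset.mem_univ i)
    _ ≤ 1 := sum_softmax_le_one v

lemma quadform_eq (y w x : Fin n → ℝ) :
    w ⬝ᵥ (softmaxJac y).mulVec x =
      (∑ i, softmax y i * (w i * x i)) -
        (∑ i, softmax y i * w i) * (∑ i, softmax y i * x i) := by
  simp only [softmaxJac, dotProduct, mulVec, dotProduct, Matrix.sub_apply,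
    Matrix.diagonal_apply, Matrix.of_apply, sub_mul, ite_mul, zero_mul,
    Finset.sum_sub_distrib, Finset.sum_ite_eq, Finset.mem_univ, if_true,
    Finset.mul_sum, Finset.sum_mul, mul_sub]
  congr 1
  · congr 1; ext i; ring
  · rw [Finset.sum_comm]; congr 1; ext i; congr 1; ext j; ring

example : True := trivial

lemma quadform_nonneg (y w : Fin n → ℝ) : 0 ≤ w ⬝ᵥ (softmaxJac y).mulVec w := by
  rw [quadform_eq]
  have key : (∑ i, softmax y i * w i) ^ 2 ≤ ∑ i, softmax y i * (w i * w i) := by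
    have h := Finset.sum_mul_sq_le_sq_mul_sq Finset.univ
      (fun i => Real.sqrt (softmax y i)) (fun i => Real.sqrt (softmax y i) * w i)
    have e1 : ∀ i : Fin n, Real.sqrt (softmax y i) * (Real.sqrt (softmax y i) * w i)
        = softmax y i * w i := fun i => by
      rw [← mul_assoc, Real.mul_self_sqrt (softmax_nonneg y i)]
    have e2 : ∀ i : Fin n, Real.sqrt (softmax y i) ^ 2 = softmax y i := fun i =>
      Real.sq_sqrt (softmax_nonneg y i)
    simp only [e1, e2] at h
    calc (∑ i, softmax y i * w i) ^ 2
        ≤ (∑ i, softmax y i) * ∑ i, (Real.sqrt (softmax y i) * w i) ^ 2 := h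
      _ ≤ 1 * ∑ i, (Real.sqrt (softmax y i) * w i) ^ 2 := by
          apply mul_le_mul_of_nonneg_right (sum_softmax_le_one y)
          exact Finset.sum_nonneg fun i _ => sq_nonneg _
      _ = ∑ i, softmax y i * (w i * w i) := by
          rw [one_mul]; congr 1; ext i
          rw [mul_pow, e2]; ring
  nlinarith [key]

lemma quadform_abs_le (y w x : Fin n → ℝ) :
    |w ⬝ᵥ (softmaxJac y).mulVec x| ≤ 2 * (∑ i, |w i|) * (∑ i, |x i|) := by
  rw [quadform_eq]
  have habs : ∀ (u : Fin n → ℝ), |∑ i, softmax y i * u i| ≤ ∑ i, |u i| := by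
    intro u
    calc |∑ i, softmax y i * u i| ≤ ∑ i, |softmax y i * u i| := Finset.abs_sum_le_sum_abs _ _
      _ ≤ ∑ i, |u i| := Finset.sum_le_sum fun i _ => by
          rw [abs_mul, abs_of_nonneg (softmax_nonneg y i)]
          exact mul_le_of_le_one_left (abs_nonneg _) (softmax_le_one y i)
  have h1 : |∑ i, softmax y i * (w i * x i)| ≤ (∑ i, |w i|) * (∑ i, |x i|) := by
    refine (habs _).trans ?_
    calc ∑ i, |w i * x i| = ∑ i, |w i| * |x i| := by simp [abs_mul]
      _ ≤ (∑ i, |w i|) * (∑ i, |x i|) := by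
          rw [Finset.sum_mul]
          refine Finset.sum_le_sum fun i _ => ?_
          refine mul_le_mul_of_nonneg_left ?_ (abs_nonneg _)
          exact Finset.single_le_sum (f := fun j => |x j|) (fun j _ => abs_nonneg _) (Finset.mem_univ i)
  have h2 : |(∑ i, softmax y i * w i) * (∑ i, softmax y i * x i)|
      ≤ (∑ i, |w i|) * (∑ i, |x i|) := by
    rw [abs_mul]
    exact mul_le_mul (habs w) (habs x) (abs_nonneg _)
      (Finset.sum_nonneg fun i _ => abs_nonneg _)
  calc |∑ i, softmax y i * (w i * x i) - (∑ i, softmax y i * w i) * (∑ i, softmax y i * x i)|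
      ≤ |∑ i, softmax y i * (w i * x i)| + |(∑ i, softmax y i * w i) * (∑ i, softmax y i * x i)| :=
        _root_.abs_sub _ _
    _ ≤ 2 * (∑ i, |w i|) * (∑ i, |x i|) := by nlinarith [h1, h2]

lemma softmaxJac_mulVec (y x : Fin n → ℝ) (i : Fin n) :
    (softmaxJac y).mulVec x i = softmax y i * x i - softmax y i * ∑ j, softmax y j * x j := by
  simp only [softmaxJac, mulVec, dotProduct, Matrix.sub_apply, Matrix.diagonal_apply,
    Matrix.of_apply, sub_mul, ite_mul, zero_mul, Finset.sum_sub_distrib,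
    Finset.sum_ite_eq, Finset.mem_univ, if_true, Finset.mul_sum]
  simp [Finset.mul_sum, mul_assoc]

lemma hasDerivAt_softmax_comp {c : ℝ → Fin n → ℝ} {c' : Fin n → ℝ} {t : ℝ}
    (hc : ∀ i, HasDerivAt (fun s => c s i) (c' i) t) (i : Fin n) :
    HasDerivAt (fun s => softmax (c s) i) ((softmaxJac (c t)).mulVec c' i) t := by
  have : Nonempty (Fin n) := ⟨i⟩
  have hN : HasDerivAt (fun s => Real.exp (c s i)) (Real.exp (c t i) * c' i) t := (hc i).exp
  have hS : HasDerivAt (fun s => ∑ j, Real.exp (c s j)) (∑ j, Real.exp (c t j) * c' j) t :=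
    HasDerivAt.fun_sum fun j _ => (hc j).exp
  have hS0 : (∑ j, Real.exp (c t j)) ≠ 0 := (sum_exp_pos _).ne'
  have hQ := hN.fun_div hS hS0
  refine hQ.congr_deriv (Eq.symm ?_)
  rw [softmaxJac_mulVec]
  have hsum : ∑ j, softmax (c t) j * c' j = (∑ j, Real.exp (c t j) * c' j) / ∑ j, Real.exp (c t j) := by
    rw [Finset.sum_div]
    congr 1; ext j
    rw [softmax]; ring
  rw [hsum, softmax]
  field_simp

example : True := trivial

lemma hasDerivAt_dot_softmax (w : Fin n → ℝ) {c : ℝ → Fin n → ℝ} {c' : Fin n → ℝ} {t : ℝ}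
    (hc : ∀ i, HasDerivAt (fun s => c s i) (c' i) t) :
    HasDerivAt (fun s => w ⬝ᵥ softmax (c s)) (w ⬝ᵥ (softmaxJac (c t)).mulVec c') t := by
  simp only [dotProduct]
  exact HasDerivAt.fun_sum fun i _ => (hasDerivAt_softmax_comp hc i).const_mul (w i)

lemma continuous_softmax_comp {c : ℝ → Fin n → ℝ} (hc : ∀ i, Continuous fun t => c t i)
    (i : Fin n) : Continuous fun t => softmax (c t) i := by
  have : Nonempty (Fin n) := ⟨i⟩
  exact (Real.continuous_exp.comp (hc i)).div
    (continuous_finset_sum _ fun j _ => Real.continuous_exp.comp (hc j))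
    fun t => (sum_exp_pos _).ne'

lemma continuous_quadform {c w x : ℝ → Fin n → ℝ} (hc : ∀ i, Continuous fun t => c t i)
    (hw : ∀ i, Continuous fun t => w t i) (hx : ∀ i, Continuous fun t => x t i) :
    Continuous fun t => w t ⬝ᵥ (softmaxJac (c t)).mulVec (x t) := by
  simp only [quadform_eq]
  refine ((continuous_finset_sum _ fun i _ => ?_).sub
    ((continuous_finset_sum _ fun i _ => ?_).mul (continuous_finset_sum _ fun i _ => ?_)))
  · exact (continuous_softmax_comp hc i).mul ((hw i).mul (hx i))
  · exact (continuous_softmax_comp hc i).mul (hw i)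
  · exact (continuous_softmax_comp hc i).mul (hx i)

noncomputable def vC {n : ℕ} (pbar qbar : Fin n → ℝ) (τ : ℝ) : Fin n → ℝ :=
  fun i => Real.sin τ * pbar i + Real.cos τ * qbar i

noncomputable def vD {n : ℕ} (pbar qbar : Fin n → ℝ) (τ : ℝ) : Fin n → ℝ :=
  fun i => Real.cos τ * pbar i - Real.sin τ * qbar i

variable {pbar qbar : Fin n → ℝ}

lemma hasDerivAt_vC (i : Fin n) (τ : ℝ) :
    HasDerivAt (fun τ => vC pbar qbar τ i) (vD pbar qbar τ i) τ := by
  have h := ((Real.hasDerivAt_sin τ).mul_const (pbar i)).fun_add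
    ((Real.hasDerivAt_cos τ).mul_const (qbar i))
  simpa [vC, vD, sub_eq_add_neg] using h

lemma continuous_vC (i : Fin n) : Continuous fun τ => vC pbar qbar τ i := by
  unfold vC; fun_prop

lemma continuous_vD (i : Fin n) : Continuous fun τ => vD pbar qbar τ i := by
  unfold vD; fun_prop

lemma vC_periodic : Function.Periodic (vC pbar qbar) (2 * π) := by
  intro τ; funext i; simp [vC, Real.sin_add_two_pi, Real.cos_add_two_pi]

lemma softmax_zero [Nonempty (Fin n)] (i : Fin n) : softmax (0 : Fin n → ℝ) i = 1 / n := by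
  simp [softmax, Finset.card_univ]

lemma integral_cross_zero (pbar qbar : Fin n → ℝ) (a : ℝ) :
    ∫ τ in (0:ℝ)..(2*π),
      vD pbar qbar τ ⬝ᵥ (softmaxJac (a • vC pbar qbar τ)).mulVec (vC pbar qbar τ) = 0 := by
  rcases isEmpty_or_nonempty (Fin n) with hn | hn
  · simp [dotProduct]
  set Z : ℝ → ℝ := fun τ =>
    vD pbar qbar τ ⬝ᵥ (softmaxJac (a • vC pbar qbar τ)).mulVec (vC pbar qbar τ) with hZ
  have hZcont : Continuous Z :=
    continuous_quadform (fun i => continuous_const.mul (continuous_vC i))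
      (fun i => continuous_vD i) (fun i => continuous_vC i)
  have hper : vC pbar qbar (2 * π) = vC pbar qbar 0 := by
    have := vC_periodic (pbar := pbar) (qbar := qbar) 0
    simpa using this
  by_cases ha : a = 0
  · subst ha
    set H : ℝ → ℝ := fun τ => (1 / (2 * (n:ℝ))) * ∑ i, (vC pbar qbar τ i)^2
      - (1/2) * ((1/(n:ℝ)) * ∑ i, vC pbar qbar τ i)^2 with hH
    have hder : ∀ τ, HasDerivAt H (Z τ) τ := by
      intro τ
      have h1 : HasDerivAt (fun τ => ∑ i, (vC pbar qbar τ i)^2)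
          (∑ i, 2 * vC pbar qbar τ i * vD pbar qbar τ i) τ := by
        refine HasDerivAt.fun_sum fun i _ => ?_
        have := ((hasDerivAt_vC (pbar := pbar) (qbar := qbar) i τ).fun_pow 2)
        simpa using this
      have h2 : HasDerivAt (fun τ => (1/(n:ℝ)) * ∑ i, vC pbar qbar τ i)
          ((1/(n:ℝ)) * ∑ i, vD pbar qbar τ i) τ :=
        (HasDerivAt.fun_sum fun i _ => hasDerivAt_vC i τ).const_mul _
      have h3 := ((h1.const_mul (1 / (2 * (n:ℝ)))).fun_sub ((h2.fun_pow 2).const_mul (1/2)))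
      refine h3.congr_deriv (Eq.symm ?_)
      have hsm : ∀ i : Fin n, softmax ((0:ℝ) • vC pbar qbar τ) i = 1 / n := by
        intro i; rw [zero_smul]; exact softmax_zero i
      rw [hZ]
      simp only [quadform_eq, hsm]
      rw [show ∑ i, 1/(n:ℝ) * (vD pbar qbar τ i * vC pbar qbar τ i)
            = (1/(n:ℝ)) * ∑ i, vD pbar qbar τ i * vC pbar qbar τ i from by
          rw [Finset.mul_sum],
        show ∑ i, 1/(n:ℝ) * vD pbar qbar τ i = (1/(n:ℝ)) * ∑ i, vD pbar qbar τ i from by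
          rw [Finset.mul_sum],
        show ∑ i, 1/(n:ℝ) * vC pbar qbar τ i = (1/(n:ℝ)) * ∑ i, vC pbar qbar τ i from by
          rw [Finset.mul_sum],
        show ∑ i, 2 * vC pbar qbar τ i * vD pbar qbar τ i
            = 2 * ∑ i, vD pbar qbar τ i * vC pbar qbar τ i from by
          rw [Finset.mul_sum]; congr 1; ext i; ring]
      ring
    rw [intervalIntegral.integral_eq_sub_of_hasDerivAt (fun t _ => hder t)
      (hZcont.intervalIntegrable _ _)]
    rw [hH]
    simp [hper]
  · set G : ℝ → ℝ := fun τ => (1/a) * (vC pbar qbar τ ⬝ᵥ softmax (a • vC pbar qbar τ))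
      - (1/a^2) * Real.log (∑ j, Real.exp (a * vC pbar qbar τ j)) with hG
    have hder : ∀ τ, HasDerivAt G (Z τ) τ := by
      intro τ
      have hcv : ∀ j : Fin n, HasDerivAt (fun s => (a • vC pbar qbar s) j)
          ((a • vD pbar qbar τ) j) τ := fun j => by
        simpa [smul_eq_mul] using (hasDerivAt_vC (pbar := pbar) (qbar := qbar) j τ).const_mul a
      have h1 : HasDerivAt (fun τ => vC pbar qbar τ ⬝ᵥ softmax (a • vC pbar qbar τ))
          (∑ i, (vD pbar qbar τ i * softmax (a • vC pbar qbar τ) i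
            + vC pbar qbar τ i * (softmaxJac (a • vC pbar qbar τ)).mulVec (a • vD pbar qbar τ) i)) τ := by
        simp only [dotProduct]
        exact HasDerivAt.fun_sum fun i _ =>
          (hasDerivAt_vC i τ).fun_mul (hasDerivAt_softmax_comp hcv i)
      have hS0 : (∑ j, Real.exp (a * vC pbar qbar τ j)) ≠ 0 :=
        (sum_exp_pos (fun j => a * vC pbar qbar τ j)).ne'
      have h2 : HasDerivAt (fun τ => Real.log (∑ j, Real.exp (a * vC pbar qbar τ j)))
          ((∑ j, Real.exp (a * vC pbar qbar τ j) * (a * vD pbar qbar τ j))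
            / (∑ j, Real.exp (a * vC pbar qbar τ j))) τ := by
        refine HasDerivAt.log ?_ hS0
        exact HasDerivAt.fun_sum fun j _ => ((hasDerivAt_vC j τ).const_mul a).exp
      have h3 := (h1.const_mul (1/a)).fun_sub (h2.const_mul (1/a^2))
      refine h3.congr_deriv (Eq.symm ?_)
      have hfrac : (∑ j, Real.exp (a * vC pbar qbar τ j) * (a * vD pbar qbar τ j))
          / (∑ j, Real.exp (a * vC pbar qbar τ j))
          = a * ∑ j, softmax (a • vC pbar qbar τ) j * vD pbar qbar τ j := by
        rw [Finset.sum_div, Finset.mul_sum]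
        refine Finset.sum_congr rfl fun j _ => ?_
        simp only [softmax, Pi.smul_apply, smul_eq_mul]
        ring
      rw [hZ]
      simp only [quadform_eq, hfrac]
      have hmain : ∑ i, (vD pbar qbar τ i * softmax (a • vC pbar qbar τ) i
            + vC pbar qbar τ i * (softmaxJac (a • vC pbar qbar τ)).mulVec (a • vD pbar qbar τ) i)
          = (∑ i, softmax (a • vC pbar qbar τ) i * vD pbar qbar τ i)
            + a * (∑ i, softmax (a • vC pbar qbar τ) i * (vD pbar qbar τ i * vC pbar qbar τ i))
            - a * ((∑ i, softmax (a • vC pbar qbar τ) i * vD pbar qbar τ i)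
                * (∑ i, softmax (a • vC pbar qbar τ) i * vC pbar qbar τ i)) := by
        have hinner : ∀ i : Fin n, (softmaxJac (a • vC pbar qbar τ)).mulVec (a • vD pbar qbar τ) i
            = softmax (a • vC pbar qbar τ) i * (a * vD pbar qbar τ i)
              - softmax (a • vC pbar qbar τ) i
                * (a * ∑ j, softmax (a • vC pbar qbar τ) j * vD pbar qbar τ j) := by
          intro i
          rw [softmaxJac_mulVec]
          simp only [Pi.smul_apply, smul_eq_mul]
          rw [show ∑ j, softmax (a • vC pbar qbar τ) j * (a * vD pbar qbar τ j)
              = a * ∑ j, softmax (a • vC pbar qbar τ) j * vD pbar qbar τ j from by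
            rw [Finset.mul_sum]; exact Finset.sum_congr rfl fun j _ => by ring]
        calc ∑ i, (vD pbar qbar τ i * softmax (a • vC pbar qbar τ) i
              + vC pbar qbar τ i * (softmaxJac (a • vC pbar qbar τ)).mulVec (a • vD pbar qbar τ) i)
            = ∑ i, (softmax (a • vC pbar qbar τ) i * vD pbar qbar τ i
              + a * (softmax (a • vC pbar qbar τ) i * (vD pbar qbar τ i * vC pbar qbar τ i))
              - a * ((∑ j, softmax (a • vC pbar qbar τ) j * vD pbar qbar τ j)
                  * (softmax (a • vC pbar qbar τ) i * vC pbar qbar τ i))) := by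
              refine Finset.sum_congr rfl fun i _ => ?_
              rw [hinner i]; ring
          _ = _ := by
              rw [Finset.sum_sub_distrib, Finset.sum_add_distrib, ← Finset.mul_sum,
                ← Finset.mul_sum, ← Finset.mul_sum]
      rw [hmain]
      field_simp
      ring
    rw [intervalIntegral.integral_eq_sub_of_hasDerivAt (fun t _ => hder t)
      (hZcont.intervalIntegrable _ _)]
    rw [hG]
    simp [hper]

lemma vC_eq_smul (τ : ℝ) : Real.sin τ • pbar + Real.cos τ • qbar = vC pbar qbar τ := by
  funext i; simp [vC]

lemma integral_shift (pbar qbar : Fin n → ℝ) (φ a : ℝ) :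
    (∫ u in (0:ℝ)..(2*π),
        vC pbar qbar u ⬝ᵥ (softmaxJac (a • vC pbar qbar (u - φ))).mulVec (vC pbar qbar (u - φ)))
      = Real.cos φ * ∫ τ in (0:ℝ)..(2*π),
          vC pbar qbar τ ⬝ᵥ (softmaxJac (a • vC pbar qbar τ)).mulVec (vC pbar qbar τ) := by
  set g : ℝ → ℝ := fun τ =>
    vC pbar qbar (τ + φ) ⬝ᵥ (softmaxJac (a • vC pbar qbar τ)).mulVec (vC pbar qbar τ) with hg
  have step1 : (∫ u in (0:ℝ)..(2*π),
      vC pbar qbar u ⬝ᵥ (softmaxJac (a • vC pbar qbar (u - φ))).mulVec (vC pbar qbar (u - φ)))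
      = ∫ u in (0:ℝ)..(2*π), g (u - φ) := by
    refine intervalIntegral.integral_congr fun u _ => ?_
    rw [hg]; simp only [sub_add_cancel]
  have hgper : Function.Periodic g (2 * π) := by
    intro τ
    rw [hg]
    simp only
    rw [show τ + 2 * π + φ = (τ + φ) + 2 * π from by ring, vC_periodic, vC_periodic]
  have step2 : (∫ u in (0:ℝ)..(2*π), g (u - φ)) = ∫ τ in (0:ℝ)..(2*π), g τ := by
    rw [intervalIntegral.integral_comp_sub_right g φ]
    have := hgper.intervalIntegral_add_eq (0 - φ) 0
    rw [show 0 - φ + 2 * π = 2 * π - φ from by ring, show (0:ℝ) + 2 * π = 2 * π from by ring] at this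
    exact this
  have hpt : ∀ τ : ℝ, g τ =
      Real.cos φ * (vC pbar qbar τ ⬝ᵥ (softmaxJac (a • vC pbar qbar τ)).mulVec (vC pbar qbar τ))
      + Real.sin φ * (vD pbar qbar τ ⬝ᵥ (softmaxJac (a • vC pbar qbar τ)).mulVec (vC pbar qbar τ)) := by
    intro τ
    have hv : vC pbar qbar (τ + φ) = Real.cos φ • vC pbar qbar τ + Real.sin φ • vD pbar qbar τ := by
      funext i
      simp only [vC, vD, Pi.add_apply, Pi.smul_apply, smul_eq_mul, Real.sin_add, Real.cos_add]
      ring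
    rw [hg]
    simp only [hv, add_dotProduct, smul_dotProduct, smul_eq_mul]
  have hcont1 : Continuous fun τ =>
      vC pbar qbar τ ⬝ᵥ (softmaxJac (a • vC pbar qbar τ)).mulVec (vC pbar qbar τ) :=
    continuous_quadform (fun i => continuous_const.mul (continuous_vC i))
      (fun i => continuous_vC i) (fun i => continuous_vC i)
  have hcont2 : Continuous fun τ =>
      vD pbar qbar τ ⬝ᵥ (softmaxJac (a • vC pbar qbar τ)).mulVec (vC pbar qbar τ) :=
    continuous_quadform (fun i => continuous_const.mul (continuous_vC i))
      (fun i => continuous_vD i) (fun i => continuous_vC i)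
  rw [step1, step2]
  calc (∫ τ in (0:ℝ)..(2*π), g τ)
      = ∫ τ in (0:ℝ)..(2*π),
          (Real.cos φ * (vC pbar qbar τ ⬝ᵥ (softmaxJac (a • vC pbar qbar τ)).mulVec (vC pbar qbar τ))
          + Real.sin φ * (vD pbar qbar τ ⬝ᵥ (softmaxJac (a • vC pbar qbar τ)).mulVec (vC pbar qbar τ))) :=
        intervalIntegral.integral_congr fun τ _ => hpt τ
    _ = Real.cos φ * (∫ τ in (0:ℝ)..(2*π),
          vC pbar qbar τ ⬝ᵥ (softmaxJac (a • vC pbar qbar τ)).mulVec (vC pbar qbar τ))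
        + Real.sin φ * ∫ τ in (0:ℝ)..(2*π),
          vD pbar qbar τ ⬝ᵥ (softmaxJac (a • vC pbar qbar τ)).mulVec (vC pbar qbar τ) := by
        rw [intervalIntegral.integral_add ((continuous_const.fun_mul hcont1).intervalIntegrable _ _)
          ((continuous_const.fun_mul hcont2).intervalIntegrable _ _),
          intervalIntegral.integral_const_mul, intervalIntegral.integral_const_mul]
    _ = Real.cos φ * ∫ τ in (0:ℝ)..(2*π),
          vC pbar qbar τ ⬝ᵥ (softmaxJac (a • vC pbar qbar τ)).mulVec (vC pbar qbar τ) := by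
        rw [integral_cross_zero]; ring

lemma abs_vC_le (u : ℝ) (i : Fin n) : |vC pbar qbar u i| ≤ |pbar i| + |qbar i| := by
  refine (abs_add_le _ _).trans (add_le_add ?_ ?_)
  · rw [abs_mul]
    exact mul_le_of_le_one_left (abs_nonneg _) (abs_sin_le_one u)
  · rw [abs_mul]
    exact mul_le_of_le_one_left (abs_nonneg _) (abs_cos_le_one u)

lemma key_deriv (pbar qbar : Fin n → ℝ) (φ a : ℝ) :
    HasDerivAt (fun a' => avgReward pbar qbar φ a')
      ((1/(2*π)) * ∫ u in (0:ℝ)..(2*π),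
        vC pbar qbar u ⬝ᵥ (softmaxJac (a • vC pbar qbar (u - φ))).mulVec (vC pbar qbar (u - φ))) a := by
  set F : ℝ → ℝ → ℝ := fun x u => vC pbar qbar u ⬝ᵥ softmax (x • vC pbar qbar (u - φ)) with hF
  set F' : ℝ → ℝ → ℝ := fun x u =>
    vC pbar qbar u ⬝ᵥ (softmaxJac (x • vC pbar qbar (u - φ))).mulVec (vC pbar qbar (u - φ)) with hF'
  have hFcont : ∀ x, Continuous (F x) := by
    intro x
    rw [hF]
    simp only [dotProduct]
    refine continuous_finset_sum _ fun i _ => (continuous_vC i).mul ?_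
    exact continuous_softmax_comp
      (fun j => continuous_const.mul ((continuous_vC j).comp (continuous_id.sub continuous_const))) i
  have hF'cont : ∀ x, Continuous (F' x) := by
    intro x
    rw [hF']
    exact continuous_quadform
      (fun j => continuous_const.mul ((continuous_vC j).comp (continuous_id.sub continuous_const)))
      (fun i => continuous_vC i)
      (fun j => (continuous_vC j).comp (continuous_id.sub continuous_const))
  set C : ℝ := ∑ i, (|pbar i| + |qbar i|) with hC
  have hCsum : ∀ u : ℝ, (∑ i, |vC pbar qbar u i|) ≤ C :=
    fun u => Finset.sum_le_sum fun i _ => abs_vC_le u i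
  have hC0 : 0 ≤ C := Finset.sum_nonneg fun i _ => by positivity
  have hmain := intervalIntegral.hasDerivAt_integral_of_dominated_loc_of_deriv_le
    (F := F) (F' := F') (x₀ := a) (a := (0:ℝ)) (b := 2*π) (μ := MeasureTheory.volume)
    (bound := fun _ => 2 * C * C) (s := Metric.ball a 1) (Metric.ball_mem_nhds a one_pos)
    (Filter.Eventually.of_forall fun x => (hFcont x).aestronglyMeasurable)
    ((hFcont a).intervalIntegrable _ _)
    ((hF'cont a).aestronglyMeasurable)
    (Filter.Eventually.of_forall fun u _ => fun x _ => ?_)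
    intervalIntegrable_const
    (Filter.Eventually.of_forall fun u _ => fun x _ => ?_)
  · have heq : (fun a' => avgReward pbar qbar φ a')
        = fun x => (1/(2*π)) * ∫ u in (0:ℝ)..(2*π), F x u := by
      funext x
      rw [avgReward, hF]
      congr 1
    rw [heq]
    exact hmain.2.const_mul _
  · rw [Real.norm_eq_abs, hF']
    refine (quadform_abs_le _ _ _).trans ?_
    have h1 := hCsum u
    have h2 := hCsum (u - φ)
    have h3 : 0 ≤ ∑ i, |vC pbar qbar (u - φ) i| := Finset.sum_nonneg fun i _ => abs_nonneg _
    have h4 : 0 ≤ ∑ i, |vC pbar qbar u i| := Finset.sum_nonneg fun i _ => abs_nonneg _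
    show (2:ℝ) * (∑ i, |vC pbar qbar u i|) * (∑ i, |vC pbar qbar (u - φ) i|) ≤ 2 * C * C
    nlinarith [mul_le_mul h1 h2 h3 hC0]
  · rw [hF, hF']
    exact hasDerivAt_dot_softmax (vC pbar qbar u)
      (fun i => by simpa [smul_eq_mul] using hasDerivAt_mul_const (vC pbar qbar (u - φ) i))

theorem gain_monotonicity (n : ℕ) (pbar qbar : Fin n → ℝ) (φ : ℝ) :
    (∀ a : ℝ,
      HasDerivAt (fun a' => avgReward pbar qbar φ a')
        (Real.cos φ * ((1 / (2 * π)) * ∫ τ in (0:ℝ)..(2 * π),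
          (fun i => Real.sin τ * pbar i + Real.cos τ * qbar i) ⬝ᵥ
            (softmaxJac (a • (Real.sin τ • pbar + Real.cos τ • qbar))).mulVec
              (fun i => Real.sin τ * pbar i + Real.cos τ * qbar i))) a ∧
      (0 ≤ Real.cos φ →
        0 ≤ Real.cos φ * ((1 / (2 * π)) * ∫ τ in (0:ℝ)..(2 * π),
          (fun i => Real.sin τ * pbar i + Real.cos τ * qbar i) ⬝ᵥ
            (softmaxJac (a • (Real.sin τ • pbar + Real.cos τ • qbar))).mulVec
              (fun i => Real.sin τ * pbar i + Real.cos τ * qbar i)))) ∧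
    (0 ≤ Real.cos φ → Monotone (fun a => avgReward pbar qbar φ a)) := by
  have hπ : (0:ℝ) ≤ 2 * π := by positivity
  have hint : ∀ a : ℝ, (∫ τ in (0:ℝ)..(2 * π),
      (fun i => Real.sin τ * pbar i + Real.cos τ * qbar i) ⬝ᵥ
        (softmaxJac (a • (Real.sin τ • pbar + Real.cos τ • qbar))).mulVec
          (fun i => Real.sin τ * pbar i + Real.cos τ * qbar i))
      = ∫ τ in (0:ℝ)..(2 * π),
          vC pbar qbar τ ⬝ᵥ (softmaxJac (a • vC pbar qbar τ)).mulVec (vC pbar qbar τ) := by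
    intro a
    refine intervalIntegral.integral_congr fun τ _ => ?_
    rw [vC_eq_smul]
    rfl
  have hderiv : ∀ a : ℝ, HasDerivAt (fun a' => avgReward pbar qbar φ a')
      (Real.cos φ * ((1 / (2 * π)) * ∫ τ in (0:ℝ)..(2 * π),
        (fun i => Real.sin τ * pbar i + Real.cos τ * qbar i) ⬝ᵥ
          (softmaxJac (a • (Real.sin τ • pbar + Real.cos τ • qbar))).mulVec
            (fun i => Real.sin τ * pbar i + Real.cos τ * qbar i))) a := by
    intro a
    have h := key_deriv pbar qbar φ a
    rw [integral_shift] at h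
    have : Real.cos φ * ((1 / (2 * π)) * ∫ τ in (0:ℝ)..(2 * π),
        (fun i => Real.sin τ * pbar i + Real.cos τ * qbar i) ⬝ᵥ
          (softmaxJac (a • (Real.sin τ • pbar + Real.cos τ • qbar))).mulVec
            (fun i => Real.sin τ * pbar i + Real.cos τ * qbar i))
        = 1 / (2 * π) * (Real.cos φ * ∫ τ in (0:ℝ)..(2 * π),
            vC pbar qbar τ ⬝ᵥ (softmaxJac (a • vC pbar qbar τ)).mulVec (vC pbar qbar τ)) := by
      rw [hint a]; ring
    rw [this]
    exact h
  have hnn : ∀ a : ℝ, 0 ≤ Real.cos φ →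
      0 ≤ Real.cos φ * ((1 / (2 * π)) * ∫ τ in (0:ℝ)..(2 * π),
        (fun i => Real.sin τ * pbar i + Real.cos τ * qbar i) ⬝ᵥ
          (softmaxJac (a • (Real.sin τ • pbar + Real.cos τ • qbar))).mulVec
            (fun i => Real.sin τ * pbar i + Real.cos τ * qbar i)) := by
    intro a hcos
    refine mul_nonneg hcos (mul_nonneg (by positivity) ?_)
    rw [hint a]
    exact intervalIntegral.integral_nonneg hπ fun τ _ => quadform_nonneg _ _
  refine ⟨fun a => ⟨hderiv a, hnn a⟩, fun hcos => ?_⟩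
  refine monotone_of_deriv_nonneg (fun a => (hderiv a).differentiableAt) fun a => ?_
  rw [(hderiv a).deriv]
  exact hnn a hcos
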